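/- Let k ≥ 2 be an integer and let G = BS(1,k) = ℤ[1/k] ⋊_φ ℤ. Let a and b be positive integers and n ≥ 1 a natural number. Then (a, tⁿ) is conjugate to (b, tⁿ) in G if and only if there exist m ∈ ℤ and c ∈ ℤ such that b = (kⁿ − 1)·c + kᵐ·a (an equality in ℚ, where kᵐ denotes the m-th integer power of k in ℚ). -/

import Mathlib

noncomputable section

/-- `ℤ[1/k]`: the additive subgroup `{a/kⁱ : a ∈ ℤ, i ∈ ℕ}` of `ℚ`. -/
def zOneOver (k : ℕ) : AddSubgroup ℚ :=
  AddSubgroup.closure {x : ℚ | ∃ (a : ℤ) (i : ℕ), x = (a : ℚ) / (k : ℚ) ^ i}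

lemma intCast_mem_zOneOver (k : ℕ) (a : ℤ) : (a : ℚ) ∈ zOneOver k :=
  AddSubgroup.subset_closure ⟨a, 0, by simp⟩

/-- Multiplication by `k` as an additive automorphism of `ℚ`. -/
def mulQ (k : ℕ) (hk : 2 ≤ k) : AddAut ℚ where
  toFun x := (k : ℚ) * x
  invFun x := ((k : ℚ))⁻¹ * x
  left_inv x := by
    have hk0 : (k : ℚ) ≠ 0 := by
      have : 0 < k := by omega
      exact_mod_cast this.ne'
    field_simp
  right_inv x := by
    have hk0 : (k : ℚ) ≠ 0 := by
      have : 0 < k := by omega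
      exact_mod_cast this.ne'
    field_simp
  map_add' x y := by ring

/-- The action of the generator `t` of `ℤ` on `ℚ` (written multiplicatively). -/
def bsAut (k : ℕ) (hk : 2 ≤ k) : MulAut (Multiplicative ℚ) :=
  AddEquiv.toMultiplicative (mulQ k hk)

lemma bsAut_apply (k : ℕ) (hk : 2 ≤ k) (y : Multiplicative ℚ) :
    Multiplicative.toAdd (bsAut k hk y) = (k : ℚ) * Multiplicative.toAdd y := rfl

lemma bsAut_inv_apply (k : ℕ) (hk : 2 ≤ k) (y : Multiplicative ℚ) :
    Multiplicative.toAdd ((bsAut k hk)⁻¹ y) = ((k : ℚ))⁻¹ * Multiplicative.toAdd y := rfl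

lemma bsAut_zpow (k : ℕ) (hk : 2 ≤ k) (n : ℤ) :
    ∀ y : Multiplicative ℚ,
      Multiplicative.toAdd ((bsAut k hk ^ n) y) = (k : ℚ) ^ n * Multiplicative.toAdd y := by
  have hk0 : (k : ℚ) ≠ 0 := by
    have : 0 < k := by omega
    exact_mod_cast this.ne'
  induction n using Int.induction_on with
  | zero => intro y; simp
  | succ m ih =>
      intro y
      rw [zpow_add_one, MulAut.mul_apply, ih, bsAut_apply, zpow_add_one₀ hk0]
      ring
  | pred m ih =>
      intro y
      rw [zpow_sub_one, MulAut.mul_apply, ih, bsAut_inv_apply, zpow_sub_one₀ hk0]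
      ring

lemma zOneOver_smul (k : ℕ) (hk : 2 ≤ k) (n : ℤ) {x : ℚ} (hx : x ∈ zOneOver k) :
    (k : ℚ) ^ n * x ∈ zOneOver k := by
  have hk0 : (k : ℚ) ≠ 0 := by
    have : 0 < k := by omega
    exact_mod_cast this.ne'
  induction hx using AddSubgroup.closure_induction with
  | mem x hx =>
      obtain ⟨a, i, rfl⟩ := hx
      apply AddSubgroup.subset_closure
      rcases le_or_gt (i : ℤ) n with h | h
      · refine ⟨a * k ^ (n - i).toNat, 0, ?_⟩
        have h1 : ((n - i).toNat : ℤ) = n - i := Int.toNat_of_nonneg (by omega)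
        push_cast
        rw [← zpow_natCast (k : ℚ) (n - i).toNat]
        rw [h1]
        rw [zpow_sub₀ hk0]
        field_simp
        rw [zpow_natCast]
      · refine ⟨a, (i - n).toNat, ?_⟩
        have h1 : (((i : ℤ) - n).toNat : ℤ) = (i : ℤ) - n := Int.toNat_of_nonneg (by omega)
        rw [← zpow_natCast (k : ℚ) i, ← zpow_natCast (k : ℚ) ((i : ℤ) - n).toNat, h1,
          zpow_sub₀ hk0]
        field_simp
  | zero => simpa using (zOneOver k).zero_mem
  | add x y hx hy ihx ihy =>
      rw [mul_add]
      exact add_mem ihx ihy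
  | neg x hx ihx =>
      rw [mul_neg]
      exact neg_mem ihx

/-- The ambient group `ℚ ⋊_φ ℤ`, in which `BS(1,k) = ℤ[1/k] ⋊_φ ℤ` sits. -/
abbrev BSAmbient (k : ℕ) (hk : 2 ≤ k) :=
  Multiplicative ℚ ⋊[zpowersHom (MulAut (Multiplicative ℚ)) (bsAut k hk)] Multiplicative ℤ

/-- The Baumslag–Solitar group `BS(1,k) = ℤ[1/k] ⋊_φ ℤ`, realised as the subgroup of
`ℚ ⋊_φ ℤ` of elements whose first coordinate lies in `ℤ[1/k]`. -/
def BS (k : ℕ) (hk : 2 ≤ k) : Subgroup (BSAmbient k hk) where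
  carrier := {g | Multiplicative.toAdd g.left ∈ zOneOver k}
  one_mem' := by
    simpa using (zOneOver k).zero_mem
  mul_mem' := by
    intro a b ha hb
    simp only [Set.mem_setOf_eq, SemidirectProduct.mul_left, toAdd_mul] at *
    refine add_mem ha ?_
    rw [zpowersHom_apply, bsAut_zpow]
    exact zOneOver_smul k hk _ hb
  inv_mem' := by
    intro a ha
    simp only [Set.mem_setOf_eq, SemidirectProduct.inv_left, zpowersHom_apply, toAdd_inv] at *
    rw [bsAut_zpow, toAdd_inv, mul_neg]
    exact neg_mem (zOneOver_smul k hk _ ha)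

/-- The element `(x, tⁿ)` of `BS(1,k)`, for `x ∈ ℤ[1/k]` and `n ∈ ℤ`. -/
def bsElem (k : ℕ) (hk : 2 ≤ k) (x : ℚ) (hx : x ∈ zOneOver k) (n : ℤ) : ↥(BS k hk) :=
  ⟨⟨Multiplicative.ofAdd x, Multiplicative.ofAdd n⟩, hx⟩

lemma zOneOver_exists (k : ℕ) (hk : 2 ≤ k) {x : ℚ} (hx : x ∈ zOneOver k) :
    ∃ (d : ℤ) (i : ℕ), x = (d : ℚ) / (k : ℚ) ^ i := by
  have hk0 : (k : ℚ) ≠ 0 := by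
    have : 0 < k := by omega
    exact_mod_cast this.ne'
  induction hx using AddSubgroup.closure_induction with
  | mem x hx => exact hx
  | zero => exact ⟨0, 0, by simp⟩
  | add x y hx hy ihx ihy =>
      obtain ⟨d1, i1, rfl⟩ := ihx
      obtain ⟨d2, i2, rfl⟩ := ihy
      refine ⟨d1 * k ^ i2 + d2 * k ^ i1, i1 + i2, ?_⟩
      rw [div_add_div _ _ (pow_ne_zero _ hk0) (pow_ne_zero _ hk0), pow_add]
      push_cast
      ring
  | neg x hx ihx =>
      obtain ⟨d, i, rfl⟩ := ihx
      exact ⟨-d, i, by push_cast; ring⟩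

/-- In `G = BS(1,k) = ℤ[1/k] ⋊_φ ℤ` (`k ≥ 2`), for positive integers `a, b`
and `n ≥ 1`, the elements `(a, tⁿ)` and `(b, tⁿ)` are conjugate if and only if there are
`m ∈ ℤ` and `c ∈ ℤ` with `b = (kⁿ - 1)·c + kᵐ·a` in `ℚ`. -/
theorem bs_conjugate_iff (k : ℕ) (hk : 2 ≤ k) (a b : ℤ) (ha : 0 < a) (hb : 0 < b)
    (n : ℕ) (hn : 1 ≤ n) :
    IsConj (bsElem k hk (a : ℚ) (intCast_mem_zOneOver k a) (n : ℤ))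
        (bsElem k hk (b : ℚ) (intCast_mem_zOneOver k b) (n : ℤ)) ↔
      ∃ m c : ℤ, (b : ℚ) = ((k : ℚ) ^ n - 1) * (c : ℚ) + (k : ℚ) ^ m * (a : ℚ) := by
  have hk0 : (k : ℚ) ≠ 0 := by
    have : 0 < k := by omega
    exact_mod_cast this.ne'
  constructor
  · -- conjugacy implies the arithmetic condition
    intro h
    obtain ⟨n', rfl⟩ : ∃ n', n = n' + 1 := ⟨n - 1, by omega⟩
    obtain ⟨g, hg⟩ := isConj_iff.mp h
    rw [mul_inv_eq_iff_eq_mul] at hg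
    have hg2 := congrArg Subtype.val hg
    simp only [Subgroup.coe_mul] at hg2
    have hL := congrArg SemidirectProduct.left hg2
    have hQ := congrArg Multiplicative.toAdd hL
    simp only [bsElem, SemidirectProduct.mul_left, zpowersHom_apply, toAdd_mul, bsAut_zpow,
      toAdd_ofAdd] at hQ
    set y0 : ℚ := Multiplicative.toAdd (g : BSAmbient k hk).left with hy0def
    set m : ℤ := Multiplicative.toAdd (g : BSAmbient k hk).right with hmdef
    have hy0 : y0 ∈ zOneOver k := g.2
    obtain ⟨d, i, hdi⟩ := zOneOver_exists k hk hy0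
    rw [zpow_natCast] at hQ
    have hb' : (b : ℚ) = (1 - (k : ℚ) ^ (n' + 1)) * y0 + (k : ℚ) ^ m * (a : ℚ) := by
      linarith [hQ]
    set j : ℕ := i + (-m).toNat with hj
    have hpow1 : (k : ℚ) ^ j = (k : ℚ) ^ i * (k : ℚ) ^ ((-m).toNat) := by rw [hj, pow_add]
    have hpow2 : (k : ℚ) ^ ((m + (j : ℤ)).toNat) = (k : ℚ) ^ m * (k : ℚ) ^ j := by
      rw [← zpow_natCast (k : ℚ) ((m + (j : ℤ)).toNat), ← zpow_natCast (k : ℚ) j,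
        ← zpow_add₀ hk0]
      congr 1
      omega
    have hQ2 : (k : ℚ) ^ j * (b : ℚ) =
        (1 - (k : ℚ) ^ (n' + 1)) * ((d : ℚ) * (k : ℚ) ^ ((-m).toNat)) +
          (k : ℚ) ^ ((m + (j : ℤ)).toNat) * (a : ℚ) := by
      have hki : (k : ℚ) ^ i ≠ 0 := pow_ne_zero _ hk0
      rw [hpow2, hb', hdi, hpow1]
      field_simp
    have hZ : (k : ℤ) ^ j * b =
        (1 - (k : ℤ) ^ (n' + 1)) * (d * (k : ℤ) ^ ((-m).toNat)) +
          (k : ℤ) ^ ((m + (j : ℤ)).toNat) * a := by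
      exact_mod_cast hQ2
    set N : ℤ := (k : ℤ) ^ (n' + 1) - 1 with hN
    set M : ℕ := j * n' + (m + (j : ℤ)).toNat with hM
    have h1 : ((k : ℤ) ^ (n' + 1)) ≡ 1 [ZMOD N] :=
      Int.modEq_iff_dvd.mpr ⟨-1, by rw [hN]; ring⟩
    have h2 : (k : ℤ) ^ j * b ≡ (k : ℤ) ^ ((m + (j : ℤ)).toNat) * a [ZMOD N] :=
      Int.modEq_iff_dvd.mpr ⟨d * (k : ℤ) ^ ((-m).toNat), by rw [hN]; linear_combination -hZ⟩
    have hA : ((k : ℤ) ^ (n' + 1)) ^ j * b ≡ b [ZMOD N] := by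
      have := (h1.pow j).mul_right b
      simpa using this
    have hB : ((k : ℤ) ^ (n' + 1)) ^ j * b ≡ (k : ℤ) ^ M * a [ZMOD N] := by
      have h3 := h2.mul_left ((k : ℤ) ^ (j * n'))
      calc ((k : ℤ) ^ (n' + 1)) ^ j * b
          = (k : ℤ) ^ (j * n') * ((k : ℤ) ^ j * b) := by ring
        _ ≡ (k : ℤ) ^ (j * n') * ((k : ℤ) ^ ((m + (j : ℤ)).toNat) * a) [ZMOD N] := h3
        _ = (k : ℤ) ^ M * a := by rw [hM]; ring
    have h5 : b ≡ (k : ℤ) ^ M * a [ZMOD N] := hA.symm.trans hB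
    obtain ⟨c, hc⟩ := Int.ModEq.dvd h5
    refine ⟨(M : ℤ), -c, ?_⟩
    have hfin : (b : ℤ) = ((k : ℤ) ^ (n' + 1) - 1) * (-c) + (k : ℤ) ^ M * a := by
      rw [hN] at hc; linarith [hc]
    rw [zpow_natCast]
    exact_mod_cast hfin
  · -- the arithmetic condition implies conjugacy
    rintro ⟨m, c, hmc⟩
    rw [isConj_iff]
    refine ⟨bsElem k hk (-(c : ℚ)) (neg_mem (intCast_mem_zOneOver k c)) m, ?_⟩
    rw [mul_inv_eq_iff_eq_mul]
    apply Subtype.ext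
    apply SemidirectProduct.ext
    · apply Multiplicative.toAdd.injective
      simp only [bsElem, Subgroup.coe_mul, SemidirectProduct.mul_left, zpowersHom_apply,
        toAdd_mul, bsAut_zpow, toAdd_ofAdd]
      rw [hmc, zpow_natCast]
      ring
    · simp only [bsElem, Subgroup.coe_mul, SemidirectProduct.mul_right]
      exact mul_comm _ _
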